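/- For t > 0 define f_t : ℝ → [0,∞) by f_t(x) = (4π)^{−1/2}·t·x^{−3/2}·e^{−t²/(4x)} for x > 0 and f_t(x) = 0 for x ≤ 0 (the density of the 1/2-stable subordinator). Then for all s > 0 and x > 0: ∫_0^∞ f_t(s)·f_t(x) dt = (4π)^{−1/2}·(s + x)^{−3/2}. -/

import Mathlib

open scoped Real

/-- The density of the 1/2-stable subordinator:
`f_t(x) = (4π)^{−1/2} t x^{−3/2} e^{−t²/(4x)}` for `x > 0`, and `0` otherwise. -/
noncomputable def stableHalfDensity (t x : ℝ) : ℝ :=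
  if 0 < x then (4 * Real.pi) ^ (-(1:ℝ)/2) * t * x ^ (-(3:ℝ)/2) * Real.exp (-(t^2) / (4*x))
  else 0

/-- `∫_0^∞ f_t(s) f_t(x) dt = (4π)^{−1/2} (s+x)^{−3/2}` for `s, x > 0`. -/
theorem stmt_17 (s x : ℝ) (hs : 0 < s) (hx : 0 < x) :
    ∫ t in Set.Ioi (0:ℝ), stableHalfDensity t s * stableHalfDensity t x
      = (4 * Real.pi) ^ (-(1:ℝ)/2) * (s + x) ^ (-(3:ℝ)/2) := by
  have hπ : 0 < Real.pi := Real.pi_pos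
  set C : ℝ := (4 * Real.pi) ^ (-(1:ℝ)/2) with hC
  set b : ℝ := (s + x) / (4 * s * x) with hb
  have hbpos : 0 < b := by positivity
  have key : ∀ t ∈ Set.Ioi (0:ℝ),
      stableHalfDensity t s * stableHalfDensity t x
        = (C * C * s ^ (-(3:ℝ)/2) * x ^ (-(3:ℝ)/2)) * (t ^ (2:ℝ) * Real.exp (-b * t ^ (2:ℝ))) := by
    intro t ht
    simp only [stableHalfDensity, if_pos hs, if_pos hx]
    have hexp : Real.exp (-(t^2) / (4*s)) * Real.exp (-(t^2) / (4*x))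
        = Real.exp (-b * t ^ 2) := by
      rw [← Real.exp_add]
      congr 1
      rw [hb]; field_simp; ring
    rw [Real.rpow_two, hC, ← hexp]
    ring
  rw [MeasureTheory.setIntegral_congr_fun measurableSet_Ioi key,
    MeasureTheory.integral_const_mul,
    integral_rpow_mul_exp_neg_mul_rpow (by norm_num) (by norm_num) hbpos]
  have hΓ : Real.Gamma (((2:ℝ) + 1) / 2) = Real.sqrt Real.pi / 2 := by
    have h : ((2:ℝ) + 1) / 2 = 1/2 + 1 := by norm_num
    rw [h, Real.Gamma_add_one (by norm_num), Real.Gamma_one_half_eq]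
    ring
  have hbr : b ^ (-((2:ℝ) + 1) / 2) = (s + x) ^ (-(3:ℝ)/2) * (4 * s * x) ^ ((3:ℝ)/2) := by
    rw [hb, Real.div_rpow (by positivity) (by positivity),
      div_eq_mul_inv, ← Real.rpow_neg (by positivity)]
    norm_num
  have h4sx : (4 * s * x) ^ ((3:ℝ)/2) = 8 * (s ^ ((3:ℝ)/2) * x ^ ((3:ℝ)/2)) := by
    rw [Real.mul_rpow (by positivity) hx.le, Real.mul_rpow (by norm_num) hs.le,
      show (4:ℝ) ^ ((3:ℝ)/2) = 8 by
        rw [show (4:ℝ) = (2:ℝ)^(2:ℝ) by norm_num, ← Real.rpow_mul (by norm_num)]; norm_num]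
    ring
  rw [hΓ, hbr, h4sx]
  have hCsq : C * C = (4 * Real.pi)⁻¹ := by
    rw [hC, ← Real.rpow_add (by positivity),
      show -(1:ℝ)/2 + -(1:ℝ)/2 = -1 by norm_num, Real.rpow_neg_one]
  have hs3 : s ^ (-(3:ℝ)/2) * s ^ ((3:ℝ)/2) = 1 := by
    rw [← Real.rpow_add hs]; norm_num
  have hx3 : x ^ (-(3:ℝ)/2) * x ^ ((3:ℝ)/2) = 1 := by
    rw [← Real.rpow_add hx]; norm_num
  have hsqpi : Real.sqrt Real.pi * Real.sqrt Real.pi = Real.pi := Real.mul_self_sqrt hπ.le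
  have hspi : Real.sqrt Real.pi ≠ 0 := ne_of_gt (Real.sqrt_pos.mpr hπ)
  have hCeq : C = (2 * Real.sqrt Real.pi)⁻¹ := by
    rw [hC, show -(1:ℝ)/2 = -(1/2) by norm_num, Real.rpow_neg (by positivity),
      ← Real.sqrt_eq_rpow]
    congr 1
    rw [show (4:ℝ) * Real.pi = (2 * Real.sqrt Real.pi)^2 by nlinarith,
      Real.sqrt_sq (by positivity)]
  calc C * C * s ^ (-(3:ℝ)/2) * x ^ (-(3:ℝ)/2)
        * ((s + x) ^ (-(3:ℝ)/2) * (8 * (s ^ ((3:ℝ)/2) * x ^ ((3:ℝ)/2))) * (1 / 2)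
          * (Real.sqrt Real.pi / 2))
      = (C * C) * 2 * Real.sqrt Real.pi
          * ((s ^ (-(3:ℝ)/2) * s ^ ((3:ℝ)/2)) * (x ^ (-(3:ℝ)/2) * x ^ ((3:ℝ)/2)))
          * (s + x) ^ (-(3:ℝ)/2) := by ring
    _ = (4 * Real.pi)⁻¹ * 2 * Real.sqrt Real.pi * (s + x) ^ (-(3:ℝ)/2) := by
        rw [hCsq, hs3, hx3]; ring
    _ = C * (s + x) ^ (-(3:ℝ)/2) := by
        rw [hCeq]
        field_simp
        linear_combination 4 * hsqpi
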